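/- Let G be a finite simple bipartite graph that contains no cycle of length 4k for any integer k ≥ 1. Then E_per(G) = E(G), i.e., the permanental energy of G equals its adjacency energy. -/

import Mathlib

open Polynomial Matrix Equiv

lemma walk_parity {V : Type*} {G : SimpleGraph V} (C : G.Coloring (ZMod 2)) {u v : V}
    (p : G.Walk u v) : C v = C u + (p.length : ZMod 2) := by
  induction p with
  | nil => simp
  | cons h q ih =>
    rename_i a b c
    have hne : C a ≠ C b := C.valid h
    have hb : C b = C a + 1 := by
      revert hne; generalize C a = x; generalize C b = y; revert x y; decide
    rw [ih, hb, SimpleGraph.Walk.length_cons]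
    push_cast
    ring

lemma closed_walk_even {V : Type*} {G : SimpleGraph V} (hbip : G.Colorable 2) {v : V}
    (p : G.Walk v v) : 2 ∣ p.length := by
  obtain ⟨C⟩ := hbip
  let C' : G.Coloring (ZMod 2) := SimpleGraph.Coloring.mk (fun x => (C x : ZMod 2))
    (by intro a b hab; exact fun h => C.valid hab (by exact h))
  have h := walk_parity C' p
  rw [← ZMod.natCast_eq_zero_iff]
  linear_combination (h.symm : _)


lemma exists_orbit_walk {n : ℕ} {G : SimpleGraph (Fin n)} (c : Equiv.Perm (Fin n))
    (h : ∀ i, c i ≠ i → G.Adj i (c i)) (v : Fin n) (hv : ∀ k : ℕ, c ((c ^ k) v) ≠ (c ^ k) v) :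
    ∀ k : ℕ, ∃ w : G.Walk v ((c ^ k) v), w.length = k ∧
      w.support = (List.range (k + 1)).map (fun j => (c ^ j) v) ∧
      w.edges = (List.range k).map (fun j => s((c ^ j) v, (c ^ (j + 1)) v)) := by
  intro k
  induction k with
  | zero => exact ⟨(SimpleGraph.Walk.nil.copy rfl (by simp)), by simp, by simp [List.range_succ], by simp⟩
  | succ k ih =>
    obtain ⟨w, hlen, hsup, hedg⟩ := ih
    have hadj : G.Adj ((c ^ k) v) ((c ^ (k + 1)) v) := by
      have := h ((c ^ k) v) (hv k)
      rwa [show c ((c ^ k) v) = (c ^ (k + 1)) v by rw [pow_succ']; rfl] at this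
    refine ⟨w.concat hadj, by simp [hlen], ?_, ?_⟩
    · rw [SimpleGraph.Walk.support_concat, hsup]
      conv_rhs => rw [List.range_succ]
      rw [List.map_append]
      rfl
    · rw [SimpleGraph.Walk.edges_concat, hedg, List.concat_eq_append, List.range_succ]
      simp

lemma cycle_mod_four {n : ℕ} {G : SimpleGraph (Fin n)} (hbip : G.Colorable 2)
    (hcyc : ∀ (v : Fin n) (w : G.Walk v v), w.IsCycle → ¬ (4 ∣ w.length))
    (c : Equiv.Perm (Fin n)) (hc : c.IsCycle) (h : ∀ i, c i ≠ i → G.Adj i (c i)) :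
    c.support.card % 4 = 2 := by
  set m := c.support.card with hm
  have hm2 : 2 ≤ m := hc.two_le_card_support
  rcases eq_or_lt_of_le hm2 with hm2' | hm3
  · omega
  -- now 3 ≤ m
  obtain ⟨v, hvne, -⟩ := id hc
  have hmem : ∀ k : ℕ, (c ^ k) v ∈ c.support := by
    intro k
    induction k with
    | zero => exact Equiv.Perm.mem_support.2 hvne
    | succ k ih =>
      rw [pow_succ', Equiv.Perm.mul_apply]
      exact (Equiv.Perm.apply_mem_support).2 ih
  have hv : ∀ k : ℕ, c ((c ^ k) v) ≠ (c ^ k) v := fun k =>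
    Equiv.Perm.mem_support.1 (hmem k)
  have horder : orderOf c = m := hc.orderOf
  have hpow1 : c ^ m = 1 := by rw [← horder]; exact pow_orderOf_eq_one c
  have hinj : ∀ a b : ℕ, a < m → b < m → (c ^ a) v = (c ^ b) v → a = b := by
    have key : ∀ a b : ℕ, a ≤ b → b < m → (c ^ a) v = (c ^ b) v → a = b := by
      intro a b hab hbm heq
      by_contra hne
      have hd : (c ^ (b - a)) ((c ^ a) v) = (c ^ a) v := by
        rw [← Equiv.Perm.mul_apply, ← pow_add, Nat.sub_add_cancel hab, ← heq]
      have h1 : c ^ (b - a) = 1 := (hc.pow_eq_one_iff' (hv a)).2 hd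
      have := orderOf_dvd_of_pow_eq_one h1
      rw [horder] at this
      have := Nat.le_of_dvd (by omega) this
      omega
    intro a b ham hbm heq
    rcases le_total a b with hab | hab
    · exact key a b hab hbm heq
    · exact (key b a hab ham heq.symm).symm
  have hmod : ∀ a : ℕ, (c ^ a) v = (c ^ (a % m)) v := by
    intro a
    conv_lhs => rw [← Nat.div_add_mod a m]
    rw [pow_add, pow_mul, hpow1, one_pow, one_mul]
  -- build the walk
  obtain ⟨p, hplen, hpsup, hpedg⟩ := exists_orbit_walk c h (c v)
    (fun k => by
      have : (c ^ k) (c v) = (c ^ (k + 1)) v := by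
        rw [pow_succ, Equiv.Perm.mul_apply]
      rw [this]; exact hv (k + 1)) (m - 1)
  have hend : (c ^ (m - 1)) (c v) = v := by
    have : (c ^ (m - 1)) (c v) = (c ^ m) v := by
      rw [show c v = (c ^ 1) v from rfl, ← Equiv.Perm.mul_apply, ← pow_add]
      congr 2
      omega
    rw [this, hpow1]; rfl
  have hshift : ∀ k : ℕ, (c ^ k) (c v) = (c ^ (k + 1)) v := fun k => by
    rw [pow_succ, Equiv.Perm.mul_apply]
  let p' : G.Walk (c v) v := p.copy rfl hend
  have hp'sup : p'.support = (List.range m).map (fun j => (c ^ (j + 1)) v) := by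
    rw [SimpleGraph.Walk.support_copy, hpsup]
    rw [show m - 1 + 1 = m by omega]
    apply List.map_congr_left
    intro j _
    rw [hshift]
  have hp'edg : p'.edges
      = (List.range (m - 1)).map (fun j => s((c ^ (j + 1)) v, (c ^ (j + 2)) v)) := by
    rw [SimpleGraph.Walk.edges_copy, hpedg]
    apply List.map_congr_left
    intro j _
    rw [hshift, hshift]
  have hpath : p'.IsPath := by
    rw [SimpleGraph.Walk.isPath_def, hp'sup]
    refine List.Nodup.map_on ?_ (List.nodup_range (n := m))
    intro x hx y hy hxy
    rw [List.mem_range] at hx hy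
    have e1 : (c ^ ((x + 1) % m)) v = (c ^ ((y + 1) % m)) v := by
      rw [← hmod, ← hmod, hxy]
    have := hinj _ _ (Nat.mod_lt _ (by omega)) (Nat.mod_lt _ (by omega)) e1
    rcases Nat.lt_or_ge (x + 1) m with hxm | hxm
    · rcases Nat.lt_or_ge (y + 1) m with hym | hym
      · rw [Nat.mod_eq_of_lt hxm, Nat.mod_eq_of_lt hym] at this; omega
      · have hym' : y + 1 = m := by omega
        rw [Nat.mod_eq_of_lt hxm, hym', Nat.mod_self] at this; omega
    · have hxm' : x + 1 = m := by omega
      rcases Nat.lt_or_ge (y + 1) m with hym | hym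
      · rw [hxm', Nat.mod_self, Nat.mod_eq_of_lt hym] at this; omega
      · omega
  have hedge : s(v, c v) ∉ p'.edges := by
    rw [hp'edg]
    intro hmem'
    obtain ⟨j, hj, hjeq⟩ := List.mem_map.1 hmem'
    rw [List.mem_range] at hj
    rw [Sym2.eq_iff] at hjeq
    rcases hjeq with ⟨h1, h2⟩ | ⟨h1, h2⟩
    · -- v = c^{j+1} v
      have e1 : (c ^ (0 % m)) v = (c ^ ((j + 1) % m)) v := by
        rw [← hmod, ← hmod]; exact h1.symm
      have := hinj _ _ (Nat.mod_lt _ (by omega)) (Nat.mod_lt _ (by omega)) e1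
      rw [Nat.zero_mod, Nat.mod_eq_of_lt (by omega)] at this
      omega
    · -- v = c^{j+2} v ∧ c v = c^{j+1} v
      have e1 : (c ^ (0 % m)) v = (c ^ ((j + 2) % m)) v := by
        rw [← hmod, ← hmod]; exact h2.symm
      have h0 := hinj _ _ (Nat.mod_lt _ (by omega)) (Nat.mod_lt _ (by omega)) e1
      rw [Nat.zero_mod] at h0
      have hj2 : j + 2 = m := by
        rcases Nat.lt_or_ge (j + 2) m with hlt | hge
        · rw [Nat.mod_eq_of_lt hlt] at h0; omega
        · omega
      have e2 : (c ^ (1 % m)) v = (c ^ ((j + 1) % m)) v := by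
        rw [← hmod, ← hmod]; exact h1.symm
      have h1' := hinj _ _ (Nat.mod_lt _ (by omega)) (Nat.mod_lt _ (by omega)) e2
      rw [Nat.mod_eq_of_lt (by omega), Nat.mod_eq_of_lt (by omega)] at h1'
      omega
  have hadjv : G.Adj v (c v) := h v hvne
  let w : G.Walk v v := SimpleGraph.Walk.cons hadjv p'
  have hwcyc : w.IsCycle := (SimpleGraph.Walk.cons_isCycle_iff p' hadjv).2 ⟨hpath, hedge⟩
  have hwlen : w.length = m := by
    have : p'.length = m - 1 := by
      rw [SimpleGraph.Walk.length_copy]; exact hplen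
    simp only [w, SimpleGraph.Walk.length_cons, this]
    omega
  have h4 : ¬ (4 ∣ m) := by
    have := hcyc v w hwcyc
    rwa [hwlen] at this
  have h2 : 2 ∣ m := by
    have := closed_walk_even hbip w
    rwa [hwlen] at this
  omega

lemma sign_eq_I_pow {n : ℕ} {G : SimpleGraph (Fin n)} (hbip : G.Colorable 2)
    (hcyc : ∀ (v : Fin n) (w : G.Walk v v), w.IsCycle → ¬ (4 ∣ w.length))
    (σ : Equiv.Perm (Fin n)) (h : ∀ i, σ i ≠ i → G.Adj i (σ i)) :
    ((Equiv.Perm.sign σ : ℤ) : ℂ) = Complex.I ^ σ.support.card := by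
  induction σ using Equiv.Perm.cycle_induction_on with
  | base_one => simp
  | base_cycles c hc =>
    have hmod := cycle_mod_four hbip hcyc c hc h
    obtain ⟨q, hq⟩ : ∃ q, c.support.card = 4 * q + 2 :=
      ⟨c.support.card / 4, by omega⟩
    rw [hc.sign, hq]
    push_cast
    rw [pow_add, pow_mul, pow_add, pow_mul]
    norm_num [Complex.I_sq]
  | induction_disjoint σ τ hd hσ ihσ ihτ =>
    have hσ' : ∀ i, σ i ≠ i → G.Adj i (σ i) := by
      intro i hi
      have hτi : τ i = i := by
        rcases hd i with h' | h'
        · exact absurd h' hi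
        · exact h'
      have := h i (by rw [Equiv.Perm.mul_apply, hτi]; exact hi)
      rwa [Equiv.Perm.mul_apply, hτi] at this
    have hτ' : ∀ i, τ i ≠ i → G.Adj i (τ i) := by
      intro i hi
      have hτmem : τ i ∈ τ.support := Equiv.Perm.apply_mem_support.2 (Equiv.Perm.mem_support.2 hi)
      have hστi : σ (τ i) = τ i := by
        rcases hd (τ i) with h' | h'
        · exact h'
        · exact absurd (Equiv.Perm.mem_support.1 hτmem) (not_not.2 h')
      have := h i (by rw [Equiv.Perm.mul_apply, hστi]; exact hi)
      rwa [Equiv.Perm.mul_apply, hστi] at this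
    rw [_root_.map_mul, hd.card_support_mul]
    push_cast
    rw [ihσ hσ', ihτ hτ', pow_add]


/-- The permanental polynomial `per(x·I − A)` of a square matrix `A`. -/
noncomputable def permPoly {n : ℕ} {R : Type*} [CommRing R] (A : Matrix (Fin n) (Fin n) R) :
    Polynomial R :=
  ((Polynomial.X : R[X]) • (1 : Matrix (Fin n) (Fin n) R[X]) - A.map Polynomial.C).permanent

/-- The permanental polynomial `π(G,x) = per(x·I − A(G))` of a graph, over `ℂ`. -/
noncomputable def graphPermPoly {n : ℕ} (G : SimpleGraph (Fin n)) : Polynomial ℂ :=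
  letI := Classical.decRel G.Adj
  permPoly (G.adjMatrix ℂ)

/-- The permanental energy `E_per(G)`: the sum of the moduli of the roots (with
multiplicity) of the permanental polynomial of `G`. -/
noncomputable def perEnergy {n : ℕ} (G : SimpleGraph (Fin n)) : ℝ :=
  ((graphPermPoly G).roots.map (fun z : ℂ => ‖z‖)).sum

/-- The (adjacency) energy of a graph: the sum of the moduli of the roots (with
multiplicity) of the characteristic polynomial of its adjacency matrix. -/
noncomputable def adjEnergy {n : ℕ} (G : SimpleGraph (Fin n)) : ℝ :=
  letI := Classical.decRel G.Adj
  (((G.adjMatrix ℂ).charpoly).roots.map (fun z : ℂ => ‖z‖)).sum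

lemma charpoly_comp {n : ℕ} (G : SimpleGraph (Fin n)) [DecidableRel G.Adj]
    (hbip : G.Colorable 2)
    (hcyc : ∀ (v : Fin n) (w : G.Walk v v), w.IsCycle → ¬ (4 ∣ w.length)) :
    ((G.adjMatrix ℂ).charpoly).comp (C Complex.I * X) =
      C (Complex.I ^ n) * permPoly (G.adjMatrix ℂ) := by
  have hφ : ∀ p : ℂ[X], p.comp (C Complex.I * X) =
      Polynomial.eval₂RingHom (C : ℂ →+* ℂ[X]) (C Complex.I * X) p := fun p => rfl
  set φ := Polynomial.eval₂RingHom (C : ℂ →+* ℂ[X]) (C Complex.I * X) with hφdef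
  set A := G.adjMatrix ℂ with hA
  rw [Matrix.charpoly, Matrix.det_apply', hφ, map_sum]
  unfold permPoly
  rw [Matrix.permanent, Finset.mul_sum]
  apply Finset.sum_congr rfl
  intro σ _
  rw [_root_.map_mul, map_prod]
  have hcast : φ ((Equiv.Perm.sign σ : ℤ) : ℂ[X]) = ((Equiv.Perm.sign σ : ℤ) : ℂ[X]) :=
    map_intCast φ _
  rw [hcast]
  by_cases hσ : ∀ i, σ i ≠ i → G.Adj (σ i) i
  · -- all moved points adjacent
    have hsign : ((Equiv.Perm.sign σ : ℤ) : ℂ) = Complex.I ^ σ.support.card :=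
      sign_eq_I_pow hbip hcyc σ (fun i hi => (hσ i hi).symm)
    have hentL : ∀ i, φ ((A.charmatrix) (σ i) i) =
        (if σ i = i then C Complex.I * X else (-1 : ℂ[X])) := by
      intro i
      by_cases hi : σ i = i
      · rw [hi, Matrix.charmatrix_apply_eq, if_pos rfl]
        simp [hA, φ]
      · rw [Matrix.charmatrix_apply_ne _ _ _ hi, if_neg hi]
        have : A (σ i) i = 1 := by
          rw [hA]; simp [SimpleGraph.adjMatrix_apply, hσ i hi]
        rw [this]
        simp [φ]
    have hentR : ∀ i, ((Polynomial.X : ℂ[X]) • (1 : Matrix (Fin n) (Fin n) ℂ[X]) -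
        A.map C) (σ i) i = (if σ i = i then (X : ℂ[X]) else (-1 : ℂ[X])) := by
      intro i
      by_cases hi : σ i = i
      · rw [if_pos hi]
        have h0 : A i i = 0 := by simp [hA, SimpleGraph.adjMatrix_apply]
        simp [Matrix.sub_apply, Matrix.smul_apply, Matrix.map_apply, h0, hi]
      · rw [if_neg hi]
        have : A (σ i) i = 1 := by
          rw [hA]; simp [SimpleGraph.adjMatrix_apply, hσ i hi]
        simp [Matrix.sub_apply, Matrix.smul_apply, Matrix.map_apply, this,
          Matrix.one_apply_ne hi]
    have hprodgen : ∀ a : ℂ[X], ∏ i, (if σ i = i then a else (-1 : ℂ[X])) =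
        a ^ (n - σ.support.card) * (-1) ^ σ.support.card := by
      intro a
      rw [← Finset.prod_filter_mul_prod_filter_not Finset.univ (fun i => σ i = i)]
      have h1 : Finset.filter (fun i => σ i = i) Finset.univ = σ.supportᶜ := by
        ext i; simp [Equiv.Perm.mem_support]
      have h2 : Finset.filter (fun i => ¬ σ i = i) Finset.univ = σ.support := by
        ext i; simp [Equiv.Perm.mem_support]
      rw [h1, h2]
      rw [Finset.prod_congr rfl (fun i hi => if_pos (by simpa [Equiv.Perm.mem_support] using hi)),
        Finset.prod_congr rfl (fun i (hi : i ∈ σ.support) =>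
          if_neg (Equiv.Perm.mem_support.1 hi)),
        Finset.prod_const, Finset.prod_const, Finset.card_compl]
      simp
    rw [Finset.prod_congr rfl (fun i _ => hentL i), Finset.prod_congr rfl (fun i _ => hentR i),
      hprodgen, hprodgen]
    have hcast2 : ((Equiv.Perm.sign σ : ℤ) : ℂ[X]) = C (Complex.I ^ σ.support.card) := by
      rw [← hsign]; simp
    rw [hcast2, mul_pow, ← Polynomial.C_pow]
    have hs : σ.support.card ≤ n := by
      have := Finset.card_le_univ σ.support
      simpa using this
    rw [show Complex.I ^ n = Complex.I ^ σ.support.card * Complex.I ^ (n - σ.support.card) by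
      rw [← pow_add]; congr 1; omega]
    rw [Polynomial.C_mul]
    ring
  · -- some moved point non-adjacent : both sides vanish
    push_neg at hσ
    obtain ⟨i, hi1, hi2⟩ := hσ
    have hAz : A (σ i) i = 0 := by
      rw [hA]; simp [SimpleGraph.adjMatrix_apply, hi2]
    have hL : φ ((A.charmatrix) (σ i) i) = 0 := by
      rw [Matrix.charmatrix_apply_ne _ _ _ hi1, hAz]
      simp
    have hR : ((Polynomial.X : ℂ[X]) • (1 : Matrix (Fin n) (Fin n) ℂ[X]) - A.map C) (σ i) i
        = 0 := by
      simp [Matrix.sub_apply, Matrix.smul_apply, Matrix.map_apply, hAz,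
        Matrix.one_apply_ne hi1]
    rw [show (∏ j, φ (A.charmatrix (σ j) j)) = 0 from
        Finset.prod_eq_zero (Finset.mem_univ i) hL,
      show (∏ j, ((Polynomial.X : ℂ[X]) • (1 : Matrix (Fin n) (Fin n) ℂ[X]) - A.map C) (σ j) j)
          = 0 from Finset.prod_eq_zero (Finset.mem_univ i) hR]
    ring

/-- If `G` is bipartite and contains no cycle of length `4k` for any `k ≥ 1`, then
the permanental energy of `G` equals its adjacency energy. -/
theorem perEnergy_eq_adjEnergy {n : ℕ} (G : SimpleGraph (Fin n))
    (hbip : G.Colorable 2)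
    (hcyc : ∀ (v : Fin n) (w : G.Walk v v), w.IsCycle → ¬ (4 ∣ w.length)) :
    perEnergy G = adjEnergy G := by
  letI := Classical.decRel G.Adj
  set A := G.adjMatrix ℂ with hA
  set φp := A.charpoly with hφp
  have hmonic : φp.Monic := Matrix.charpoly_monic A
  have hsplits : Splits φp := IsAlgClosed.splits φp
  have hcard : Multiset.card φp.roots = n := by
    rw [splits_iff_card_roots.mp hsplits, hφp, Matrix.charpoly_natDegree_eq_dim,
      Fintype.card_fin]
  have hfact : φp = (φp.roots.map (fun a => X - C a)).prod :=
    hsplits.eq_prod_roots_of_monic hmonic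
  have hkey := charpoly_comp G hbip hcyc
  rw [← hA, ← hφp] at hkey
  have hlin : ∀ a : ℂ, ((X : ℂ[X]) - C a).comp (C Complex.I * X)
      = C Complex.I * (X - C (-Complex.I * a)) := by
    intro a
    rw [sub_comp, X_comp, C_comp, mul_sub, ← C_mul]
    congr 2
    have : Complex.I * (-Complex.I * a) = a := by
      rw [← mul_assoc, mul_neg, Complex.I_mul_I]
      ring
    rw [this]
  have hcomp : φp.comp (C Complex.I * X)
      = C (Complex.I ^ n) * ((φp.roots.map (fun a => X - C (-Complex.I * a))).prod) := by
    conv_lhs => rw [hfact]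
    rw [multiset_prod_comp, Multiset.map_map]
    have : Multiset.map ((fun p => p.comp (C Complex.I * X)) ∘ fun a => X - C a) φp.roots
        = Multiset.map (fun a => C Complex.I * ((X:ℂ[X]) - C (-Complex.I * a))) φp.roots := by
      apply Multiset.map_congr rfl
      intro a _
      exact hlin a
    rw [this, Multiset.prod_map_mul]
    congr 1
    rw [Multiset.map_const', Multiset.prod_replicate, hcard, ← Polynomial.C_pow]
  rw [hcomp] at hkey
  have hCne : (C (Complex.I ^ n) : ℂ[X]) ≠ 0 := by
    simp [Polynomial.C_eq_zero, pow_ne_zero, Complex.I_ne_zero]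
  have hperm : permPoly A = (φp.roots.map (fun a => X - C (-Complex.I * a))).prod :=
    (mul_left_cancel₀ hCne hkey).symm
  have hgpp : graphPermPoly G = permPoly A := rfl
  have hroots : (graphPermPoly G).roots = φp.roots.map (fun a => -Complex.I * a) := by
    rw [hgpp, hperm]
    have : (φp.roots.map (fun a => (X:ℂ[X]) - C (-Complex.I * a)))
        = ((φp.roots.map (fun a => -Complex.I * a)).map (fun b => (X:ℂ[X]) - C b)) := by
      rw [Multiset.map_map]
      rfl
    rw [this, roots_multiset_prod_X_sub_C]
  show ((graphPermPoly G).roots.map (fun z : ℂ => ‖z‖)).sum = (φp.roots.map (fun z : ℂ => ‖z‖)).sum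
  rw [hroots, Multiset.map_map]
  congr 1
  apply Multiset.map_congr rfl
  intro a _
  simp [_root_.map_mul]
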